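/- Let (X,d) be an ultrametric space, (Y,ρ) a semimetric space, and f: X→Y a surjective η-quasisymmetric mapping with η(1)=1. Then (Y,ρ) satisfies the strong triangle inequality: ρ(x,y) ≤ max{ρ(x,z), ρ(z,y)} for all x,y,z∈Y. -/
import Mathlib


open Set Filter Topology

structure IsSemimetric {X : Type*} (d : X → X → ℝ) : Prop where
  nonneg : ∀ x y, 0 ≤ d x y
  eq_iff : ∀ x y, d x y = 0 ↔ x = y
  symm : ∀ x y, d x y = d y x

/-- `η` is a homeomorphism of `[0,∞)` onto itself (increasing, `η 0 = 0`). -/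
structure IsQSHomeo (η : ℝ → ℝ) : Prop where
  maps : ∀ t, 0 ≤ t → 0 ≤ η t
  zero : η 0 = 0
  strictMonoOn : StrictMonoOn η (Set.Ici 0)
  surjOn : ∀ s, 0 ≤ s → ∃ t, 0 ≤ t ∧ η t = s
  continuousOn : ContinuousOn η (Set.Ici 0)

/-- `f` is an `η`-quasisymmetric mapping between the semimetric spaces `(X,d)` and `(Y,ρ)`. -/
def IsQuasisymmetric {X Y : Type*} (d : X → X → ℝ) (ρ : Y → Y → ℝ)
    (η : ℝ → ℝ) (f : X → Y) : Prop :=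
  IsQSHomeo η ∧ ∀ (x a b : X) (t : ℝ), 0 < t →
    d x a ≤ t * d x b → ρ (f x) (f a) ≤ η t * ρ (f x) (f b)

structure IsTriangleFunction {X : Type*} (d : X → X → ℝ) (Φ : ℝ → ℝ → ℝ) : Prop where
  symm : ∀ u v, Φ u v = Φ v u
  mono : ∀ u u' v v', 0 ≤ u → u ≤ u' → 0 ≤ v → v ≤ v' → Φ u v ≤ Φ u' v'
  zero : Φ 0 0 = 0
  tri : ∀ x y z, d x y ≤ Φ (d x z) (d y z)

def IsPtolemaic {X : Type*} (d : X → X → ℝ) : Prop :=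
  ∀ x y z t : X, d x z * d t y ≤ d x y * d t z + d x t * d y z

def distSet {X : Type*} (d : X → X → ℝ) (A : Set X) : Set ℝ :=
  {r | ∃ x ∈ A, ∃ y ∈ A, r = d x y}

noncomputable def sdiam {X : Type*} (d : X → X → ℝ) (A : Set X) : ℝ :=
  sSup (distSet d A)

def spectrum' {X : Type*} (d : X → X → ℝ) : Set ℝ := {r | ∃ x y : X, r = d x y}

def IsWeakSimilarity {X Y : Type*} (d : X → X → ℝ) (ρ : Y → Y → ℝ)
    (f : X → Y) (φ : ℝ → ℝ) : Prop :=
  Function.Bijective f ∧ StrictMonoOn φ (spectrum' d) ∧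
    φ '' spectrum' d = spectrum' ρ ∧ ∀ x y, φ (d x y) = ρ (f x) (f y)

/-- The topology `τ_d` generated by a semimetric `d`. -/
def tauD {X : Type*} (d : X → X → ℝ) : TopologicalSpace X where
  IsOpen A := ∀ a ∈ A, ∃ r > 0, {x | d a x < r} ⊆ A
  isOpen_univ := fun _ _ => ⟨1, one_pos, fun _ _ => trivial⟩
  isOpen_inter := fun A B hA hB a ha => by
    obtain ⟨r1, hr1, h1⟩ := hA a ha.1
    obtain ⟨r2, hr2, h2⟩ := hB a ha.2
    refine ⟨min r1 r2, lt_min hr1 hr2, fun x hx => ⟨h1 ?_, h2 ?_⟩⟩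
    · have hx' : d a x < min r1 r2 := hx
      exact lt_of_lt_of_le hx' (min_le_left r1 r2)
    · have hx' : d a x < min r1 r2 := hx
      exact lt_of_lt_of_le hx' (min_le_right r1 r2)
  isOpen_sUnion := fun S hS a ha => by
    obtain ⟨A, hA, haA⟩ := ha
    obtain ⟨r, hr, h⟩ := hS A hA a haA
    exact ⟨r, hr, fun x hx => ⟨A, hA, h hx⟩⟩

theorem stmt_8 {X Y : Type*} (d : X → X → ℝ) (ρ : Y → Y → ℝ) (η : ℝ → ℝ) (f : X → Y)
    (hd : IsSemimetric d) (hρ : IsSemimetric ρ)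
    (hultra : ∀ x y z : X, d x y ≤ max (d x z) (d z y))
    (hsurj : Function.Surjective f)
    (hq : IsQuasisymmetric d ρ η f)
    (hη1 : η 1 = 1) :
    ∀ x y z : Y, ρ x y ≤ max (ρ x z) (ρ z y) := by
  intro x y z
  obtain ⟨a, rfl⟩ := hsurj x
  obtain ⟨b, rfl⟩ := hsurj y
  obtain ⟨c, rfl⟩ := hsurj z
  have hqs := hq.2
  have h := hultra a b c
  rcases max_cases (d a c) (d c b) with ⟨heq, hge⟩ | ⟨heq, hlt⟩
  · -- d a b ≤ d a c
    rw [heq] at h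
    have := hqs a b c 1 one_pos (by linarith)
    rw [hη1, one_mul] at this
    exact le_max_of_le_left this
  · -- d a b ≤ d c b
    rw [heq] at h
    have hdb : d b a ≤ 1 * d b c := by
      rw [one_mul, hd.symm b a, hd.symm b c]
      linarith [hd.symm c b]
    have := hqs b a c 1 one_pos hdb
    rw [hη1, one_mul] at this
    rw [hρ.symm (f a) (f b)]
    exact le_max_of_le_right (by rw [hρ.symm (f c) (f b)]; exact this)
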